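/- Let n ≥ 49 and m ≥ 1 be integers with 25·m² < 2·(2n+1)²; set q = (2n+1)² and ζ = exp(2πi/q). Let y ∈ M_q(ℂ) be the diagonal matrix with diagonal entries ζ^{k·m} (k = 0,…,q−1) and let z ∈ M_q(ℂ) be the permutation matrix of the cyclic shift by m (z·e_k = e_{(k+m) mod q}). Then for all real numbers α, β, γ ≥ 0, the operator norm (as operators on ℓ²(ℂ^q)) satisfies ‖α·1 + β·y + γ·z‖ ≥ (α + β + γ)·(1 − (25/2)·m²/(2n+1)²)^(1/2). -/

import Mathlib

open Fin.NatCast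

lemma stmt19_mod2 (a q : ℕ) (hq : 0 < q) (h : a < 2*q) : a % q = a ∨ a % q = a - q := by
  rcases lt_or_ge a q with h' | h'
  · exact Or.inl (Nat.mod_eq_of_lt h')
  · right; rw [Nat.mod_eq_sub_mod h', Nat.mod_eq_of_lt (by omega)]

lemma stmt19_key_iff (q m : ℕ) [NeZero q] (hm : m < q) (i j : Fin q) :
    ((i:ℕ) = ((j:ℕ)+m) % q) ↔ j = i - (m : Fin q) := by
  have hmv : ((m : Fin q) : ℕ) = m := Fin.val_cast_of_lt hm
  have h2 : (j = i - (m:Fin q)) ↔ (i = j + (m:Fin q)) :=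
    ⟨fun h => by rw [h]; exact (sub_add_cancel i _).symm,
     fun h => by rw [h]; exact (add_sub_cancel_right j _).symm⟩
  rw [h2, Fin.ext_iff, Fin.add_def, hmv]

lemma stmt19_zmul (q m : ℕ) [NeZero q] (hm : m < q) (f : Fin q → ℂ) (i : Fin q) :
    ((Matrix.of fun i j : Fin q =>
      if (i : ℕ) = ((j : ℕ) + m) % q then (1 : ℂ) else 0).mulVec f) i
      = f (i - (m : Fin q)) := by
  unfold Matrix.mulVec dotProduct
  simp only [Matrix.of_apply]
  rw [Finset.sum_congr rfl (fun j _ => by rw [if_congr (stmt19_key_iff q m hm i j) rfl rfl])]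
  simp

lemma stmt19_dlip (q m : ℕ) [NeZero q] (hm : m < q) (k : Fin q) :
    min ((k - (m:Fin q) : Fin q) : ℕ) (q - ((k - (m:Fin q) : Fin q) : ℕ))
        ≤ min (k:ℕ) (q - (k:ℕ)) + m
    ∧ min (k:ℕ) (q - (k:ℕ))
        ≤ min ((k - (m:Fin q) : Fin q) : ℕ) (q - ((k - (m:Fin q) : Fin q) : ℕ)) + m := by
  have hq : 0 < q := Nat.pos_of_ne_zero (NeZero.ne q)
  have hmv : ((m : Fin q) : ℕ) = m := Fin.val_cast_of_lt hm
  have hsub : ((k - (m : Fin q) : Fin q) : ℕ) = ((q - m) + (k:ℕ)) % q := by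
    rw [Fin.sub_def, hmv]
  have h2 := stmt19_mod2 ((q-m)+(k:ℕ)) q hq (by omega)
  have hk := k.isLt
  rw [hsub]
  rcases h2 with h2 | h2 <;> rw [h2] <;> omega

lemma stmt19_restrict (q L : ℕ) (hL : L ≤ q) (f : ℕ → ℝ) :
    ∑ j ∈ Finset.range q, (if j < L then f j else 0) = ∑ j ∈ Finset.range L, f j := by
  rw [← Finset.sum_subset (Finset.range_subset_range.2 hL)
    (by intro x hx hnx; simp at hnx ⊢; omega)]
  exact Finset.sum_congr rfl (by intro x hx; simp at hx; simp [hx])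

lemma stmt19_count_lt (q L : ℕ) (hL : L ≤ q) (c : ℝ) :
    ∑ j ∈ Finset.range q, (if j < L then c else 0) = L * c := by
  rw [stmt19_restrict q L hL (fun _ => c), Finset.sum_const, Finset.card_range,
    nsmul_eq_mul]

lemma stmt19_count_ge (q L : ℕ) (hL : L ≤ q) (c : ℝ) (hc : 0 ≤ c) :
    ∑ j ∈ Finset.range q, (if q - j < L then c else 0) ≤ L * c := by
  rw [← Finset.sum_range_reflect]
  calc ∑ j ∈ Finset.range q, (if q - (q - 1 - j) < L then c else 0)
      ≤ ∑ j ∈ Finset.range q, (if j < L then c else 0) := by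
        apply Finset.sum_le_sum
        intro j hj
        simp only [Finset.mem_range] at hj
        have hqj : q - (q - 1 - j) = j + 1 := by omega
        rw [hqj]
        by_cases h1 : j + 1 < L <;> by_cases h2 : j < L <;>
          simp only [h1, h2, if_true, if_false, if_pos, if_neg, not_false_iff] <;>
          first | exact le_rfl | exact hc | exact absurd h1 (by omega)
    _ = L * c := stmt19_count_lt q L hL c

lemma stmt19_sum_sq_succ (L : ℕ) :
    ∑ j ∈ Finset.range L, ((j:ℝ)+1)^2 = (L:ℝ)*((L:ℝ)+1)*(2*(L:ℝ)+1)/6 := by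
  induction L with
  | zero => simp
  | succ L ih => rw [Finset.sum_range_succ, ih]; push_cast; ring

lemma stmt19_sum_desc_sq (L : ℕ) :
    ∑ j ∈ Finset.range L, (((L - j : ℕ)):ℝ)^2 = (L:ℝ)*((L:ℝ)+1)*(2*(L:ℝ)+1)/6 := by
  rw [← Finset.sum_range_reflect, ← stmt19_sum_sq_succ L]
  apply Finset.sum_congr rfl
  intro j hj
  simp only [Finset.mem_range] at hj
  have : L - (L - 1 - j) = j + 1 := by omega
  rw [this]; push_cast; ring

set_option maxHeartbeats 8000000 in
theorem stmt_19 (n m : ℕ) (hn : 49 ≤ n) (hm : 1 ≤ m)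
    (h25 : 25 * m ^ 2 < 2 * (2 * n + 1) ^ 2)
    (q : ℕ) (hq : q = (2 * n + 1) ^ 2)
    (ζ : ℂ) (hζ : ζ = Complex.exp (2 * Real.pi * Complex.I / (q : ℂ)))
    (y z : Matrix (Fin q) (Fin q) ℂ)
    (hy : y = Matrix.diagonal fun k : Fin q => ζ ^ ((k : ℕ) * m))
    (hz : z = Matrix.of fun i j : Fin q =>
      if (i : ℕ) = ((j : ℕ) + m) % q then (1 : ℂ) else 0)
    (α β γ : ℝ) (hα : 0 ≤ α) (hβ : 0 ≤ β) (hγ : 0 ≤ γ) :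
    (α + β + γ) * Real.sqrt (1 - (25 / 2) * (m : ℝ) ^ 2 / (2 * (n : ℝ) + 1) ^ 2)
      ≤ ‖Matrix.toEuclideanCLM (𝕜 := ℂ) (n := Fin q)
          ((α : ℂ) • 1 + (β : ℂ) • y + (γ : ℂ) • z)‖ := by
  have hπ4 : Real.pi ≤ 4 := Real.pi_le_four
  have hπ0 : 0 < Real.pi := Real.pi_pos
  set N : ℕ := 2*n+1 with hN
  have hqN : q = N^2 := hq
  have hN99 : 99 ≤ N := by omega
  have hq0 : 0 < q := by rw [hqN]; positivity
  haveI : NeZero q := ⟨by omega⟩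
  have hmN : m < N := by nlinarith
  have hmq : m < q := by nlinarith
  have h2Nq : 2*N + 2*m ≤ q := by nlinarith
  have hNR : (0:ℝ) < (N:ℝ) := by positivity
  have hqR : ((q:ℝ)) = (N:ℝ)^2 := by rw [hqN]; push_cast; ring
  have hqR0 : (0:ℝ) < (q:ℝ) := by exact_mod_cast hq0
  set D : ℕ → ℕ := fun j => min j (q - j) with hD
  set W : ℕ → ℝ := fun j => ((N - D j : ℕ) : ℝ) with hW
  set w : Fin q → ℝ := fun k => W (k:ℕ) with hw
  set mf : Fin q := (m : Fin q) with hmf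
  set S0 := ∑ k : Fin q, (w k)^2 with hS0
  set S1 := ∑ k : Fin q, w k * w (k - mf) with hS1
  set S2 := ∑ k : Fin q, (w k)^2 * ((D (k:ℕ)):ℝ)^2 with hS2
  set C := ∑ k : Fin q, (w k)^2 * Real.cos (2*Real.pi*((((k:ℕ)*m : ℕ)):ℝ)/(q:ℝ)) with hC
  -- (a) lower bound for S0
  have hS0low : 2*(N:ℝ)^3/3 ≤ S0 := by
    have h2N : 2*N ≤ q := by nlinarith
    have hS0q : S0 = ∑ j ∈ Finset.range q, (W j)^2 := by
      rw [hS0, hw]; exact Fin.sum_univ_eq_sum_range (fun j => (W j)^2) q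
    have key : ∑ j ∈ Finset.range q, ((if j < N then (((N - j : ℕ)):ℝ)^2 else 0)
        + (if q - j < N then (((N - (q - j) : ℕ)):ℝ)^2 else 0))
        ≤ ∑ j ∈ Finset.range q, (W j)^2 := by
      apply Finset.sum_le_sum
      intro j hj
      simp only [Finset.mem_range] at hj
      by_cases h1 : j < N
      · have hmin : D j = j := by simp only [hD]; omega
        have h2 : ¬(q - j < N) := by omega
        rw [if_pos h1, if_neg h2, add_zero]
        simp only [hW, hmin]
        exact le_rfl
      · by_cases h2 : q - j < N
        · have hmin : D j = q - j := by simp only [hD]; omega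
          rw [if_neg h1, if_pos h2, zero_add]
          simp only [hW, hmin]
          exact le_rfl
        · rw [if_neg h1, if_neg h2, add_zero]
          positivity
    rw [Finset.sum_add_distrib] at key
    have e1 : ∑ j ∈ Finset.range q, (if j < N then (((N - j : ℕ)):ℝ)^2 else 0)
        = (N:ℝ)*((N:ℝ)+1)*(2*(N:ℝ)+1)/6 := by
      rw [stmt19_restrict q N (by omega) (fun j => (((N - j : ℕ)):ℝ)^2),
        stmt19_sum_desc_sq N]
    have e2 : ∑ j ∈ Finset.range q, (if q - j < N then (((N - (q - j) : ℕ)):ℝ)^2 else 0)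
        = ((N-1:ℕ):ℝ)*(((N-1:ℕ):ℝ)+1)*(2*((N-1:ℕ):ℝ)+1)/6 := by
      rw [← Finset.sum_range_reflect]
      have hcong : ∀ j ∈ Finset.range q,
          (if q - (q - 1 - j) < N then (((N - (q - (q - 1 - j)) : ℕ)):ℝ)^2 else 0)
          = (if j < N - 1 then ((((N-1) - j : ℕ)):ℝ)^2 else 0) := by
        intro j hj
        simp only [Finset.mem_range] at hj
        have hj1 : q - (q - 1 - j) = j + 1 := by omega
        rw [hj1]
        by_cases h : j + 1 < N
        · rw [if_pos h, if_pos (by omega : j < N - 1)]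
          have : N - (j+1) = (N-1) - j := by omega
          rw [this]
        · rw [if_neg h, if_neg (by omega : ¬(j < N - 1))]
      rw [Finset.sum_congr rfl hcong,
        stmt19_restrict q (N-1) (by omega) (fun j => ((((N-1) - j : ℕ)):ℝ)^2),
        stmt19_sum_desc_sq (N-1)]
    have hcast : ((N-1:ℕ):ℝ) = (N:ℝ)-1 := by
      push_cast [Nat.cast_sub (by omega : 1 ≤ N)]; ring
    rw [e1, e2, hcast] at key
    rw [hS0q]
    nlinarith [key, hNR]
  have hS0pos : (0:ℝ) < S0 := by nlinarith
  -- (b) upper bound for S2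
  have hS2le : S2 ≤ (N:ℝ)^5/8 := by
    have hptw : ∀ k : Fin q, (w k)^2 * ((D (k:ℕ)):ℝ)^2
        ≤ (if (k:ℕ) < N then ((N:ℝ)^4/16) else 0)
          + (if q - (k:ℕ) < N then ((N:ℝ)^4/16) else 0) := by
      intro k
      have hk := k.isLt
      by_cases hd : D (k:ℕ) < N
      · have hwk : w k = (N:ℝ) - ((D (k:ℕ)):ℝ) := by
          simp only [hw, hW]
          push_cast [Nat.cast_sub (le_of_lt hd)]
          ring
        have hDnn : (0:ℝ) ≤ ((D (k:ℕ)):ℝ) := Nat.cast_nonneg _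
        have hw0 : (0:ℝ) ≤ w k := by simp only [hw, hW]; exact Nat.cast_nonneg _
        have hab : w k * ((D (k:ℕ)):ℝ) ≤ (N:ℝ)^2/4 := by
          nlinarith [sq_nonneg (w k - ((D (k:ℕ)):ℝ))]
        have habnn : (0:ℝ) ≤ w k * ((D (k:ℕ)):ℝ) := mul_nonneg hw0 hDnn
        have hle : (w k)^2*((D (k:ℕ)):ℝ)^2 ≤ (N:ℝ)^4/16 := by nlinarith [hab, habnn]
        have hcase : (k:ℕ) < N ∨ q - (k:ℕ) < N := by simp only [hD] at hd; omega
        rcases hcase with h | h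
        · rw [if_pos h]
          have : (0:ℝ) ≤ (if q - (k:ℕ) < N then ((N:ℝ)^4/16) else 0) := by positivity
          linarith
        · rw [if_pos h]
          have : (0:ℝ) ≤ (if (k:ℕ) < N then ((N:ℝ)^4/16) else 0) := by positivity
          linarith
      · have hwk : w k = 0 := by
          simp only [hw, hW]
          have hz0 : N - D (k:ℕ) = 0 := by omega
          rw [hz0, Nat.cast_zero]
        rw [hwk]
        have : (0:ℝ)^2 * ((D (k:ℕ)):ℝ)^2 = 0 := by ring
        rw [this]
        positivity
    calc S2 ≤ ∑ k : Fin q, ((if (k:ℕ) < N then ((N:ℝ)^4/16) else 0)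
          + (if q - (k:ℕ) < N then ((N:ℝ)^4/16) else 0)) := by
          rw [hS2]; exact Finset.sum_le_sum (fun k _ => hptw k)
      _ = ∑ j ∈ Finset.range q, ((if j < N then ((N:ℝ)^4/16) else 0)
          + (if q - j < N then ((N:ℝ)^4/16) else 0)) :=
          Fin.sum_univ_eq_sum_range
            (fun j => (if j < N then ((N:ℝ)^4/16) else 0)
              + (if q - j < N then ((N:ℝ)^4/16) else 0)) q
      _ ≤ (N:ℝ)*((N:ℝ)^4/16) + (N:ℝ)*((N:ℝ)^4/16) := by
          rw [Finset.sum_add_distrib]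
          have c1 := stmt19_count_lt q N (by omega) ((N:ℝ)^4/16)
          have c2 := stmt19_count_ge q N (by omega) ((N:ℝ)^4/16) (by positivity)
          linarith
      _ = (N:ℝ)^5/8 := by ring
  have hS2nn : (0:ℝ) ≤ S2 := Finset.sum_nonneg fun k _ => by positivity
  -- (c) lower bound for S1
  have hS1ge : S0 - ((N:ℝ)+m)*(m:ℝ)^2 ≤ S1 := by
    have hresum : ∑ k : Fin q, (w (k - mf))^2 = S0 := by
      have h := Equiv.sum_comp (Equiv.subRight mf) (fun k : Fin q => (w k)^2)
      simp only [Equiv.subRight_apply] at h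
      rw [hS0]; exact h
    have hident : ∑ k : Fin q, (w k - w (k - mf))^2 = 2*S0 - 2*S1 := by
      have expand : ∀ k : Fin q, (w k - w (k - mf))^2
          = ((w k)^2 + (w (k - mf))^2) - 2*(w k * w (k - mf)) := fun k => by ring
      rw [Finset.sum_congr rfl (fun k _ => expand k), Finset.sum_sub_distrib,
        Finset.sum_add_distrib, hresum, ← Finset.mul_sum, ← hS0, ← hS1]
      ring
    have hptw : ∀ k : Fin q, (w k - w (k - mf))^2
        ≤ (if (k:ℕ) < N+m then ((m:ℝ)^2) else 0)
          + (if q - (k:ℕ) < N+m then ((m:ℝ)^2) else 0) := by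
      intro k
      obtain ⟨hl1, hl2⟩ := stmt19_dlip q m hmq k
      rw [← hmf] at hl1 hl2
      have hDl1 : D ((k - mf : Fin q):ℕ) ≤ D (k:ℕ) + m := by
        simp only [hD]; exact hl1
      have hDl2 : D (k:ℕ) ≤ D ((k - mf : Fin q):ℕ) + m := by
        simp only [hD]; exact hl2
      by_cases hd : D (k:ℕ) < N + m
      · have hcase : (k:ℕ) < N + m ∨ q - (k:ℕ) < N + m := by
          have hk := k.isLt
          simp only [hD] at hd; omega
        have ha : N - D (k:ℕ) ≤ (N - D ((k - mf : Fin q):ℕ)) + m := by omega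
        have hb : N - D ((k - mf : Fin q):ℕ) ≤ (N - D (k:ℕ)) + m := by omega
        have haR : (w k) ≤ (w (k - mf)) + (m:ℝ) := by
          simp only [hw, hW]; exact_mod_cast ha
        have hbR : (w (k - mf)) ≤ (w k) + (m:ℝ) := by
          simp only [hw, hW]; exact_mod_cast hb
        have hsq : (w k - w (k - mf))^2 ≤ (m:ℝ)^2 := by nlinarith [haR, hbR]
        rcases hcase with h | h
        · rw [if_pos h]
          have : (0:ℝ) ≤ (if q - (k:ℕ) < N+m then ((m:ℝ)^2) else 0) := by positivity
          linarith
        · rw [if_pos h]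
          have : (0:ℝ) ≤ (if (k:ℕ) < N+m then ((m:ℝ)^2) else 0) := by positivity
          linarith
      · have hw1 : w k = 0 := by
          simp only [hw, hW]
          have hz0 : N - D (k:ℕ) = 0 := by omega
          rw [hz0, Nat.cast_zero]
        have hw2 : w (k - mf) = 0 := by
          simp only [hw, hW]
          have hz0 : N - D ((k - mf : Fin q):ℕ) = 0 := by omega
          rw [hz0, Nat.cast_zero]
        rw [hw1, hw2]
        have : ((0:ℝ) - 0)^2 = 0 := by ring
        rw [this]
        positivity
    have hcount : ∑ k : Fin q, ((if (k:ℕ) < N+m then ((m:ℝ)^2) else 0)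
        + (if q - (k:ℕ) < N+m then ((m:ℝ)^2) else 0)) ≤ 2*((N:ℝ)+m)*(m:ℝ)^2 := by
      rw [Fin.sum_univ_eq_sum_range
        (fun j => (if j < N+m then ((m:ℝ)^2) else 0)
          + (if q - j < N+m then ((m:ℝ)^2) else 0)) q, Finset.sum_add_distrib]
      have c1 := stmt19_count_lt q (N+m) (by omega) ((m:ℝ)^2)
      have c2 := stmt19_count_ge q (N+m) (by omega) ((m:ℝ)^2) (by positivity)
      push_cast at c1 c2 ⊢
      linarith
    have hsum := (Finset.sum_le_sum (fun k (_ : k ∈ Finset.univ) => hptw k)).trans hcount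
    rw [hident] at hsum
    linarith
  -- (d) lower bound for C
  have hCge : S0 - S2*((2*Real.pi*(m:ℝ)/(q:ℝ))^2/2) ≤ C := by
    have hph : ∀ k : Fin q, Real.cos (2*Real.pi*((((k:ℕ)*m : ℕ)):ℝ)/(q:ℝ))
        = Real.cos (2*Real.pi*((D (k:ℕ)):ℝ)*(m:ℝ)/(q:ℝ)) := by
      intro k
      have hk := k.isLt
      rcases le_or_gt ((k:ℕ)) (q - (k:ℕ)) with h | h
      · have hDk : D (k:ℕ) = (k:ℕ) := by simp only [hD]; omega
        rw [hDk]; congr 1; push_cast; ring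
      · have hDk : D (k:ℕ) = q - (k:ℕ) := by simp only [hD]; omega
        have harg : 2*Real.pi*((((k:ℕ)*m : ℕ)):ℝ)/(q:ℝ)
            = (m:ℝ)*(2*Real.pi) - 2*Real.pi*((D (k:ℕ)):ℝ)*(m:ℝ)/(q:ℝ) := by
          rw [hDk]
          push_cast [Nat.cast_sub (le_of_lt hk)]
          field_simp
          ring
        rw [harg, Real.cos_nat_mul_two_pi_sub]
    have hptw : ∀ k : Fin q,
        (w k)^2 - (w k)^2*((D (k:ℕ)):ℝ)^2*((2*Real.pi*(m:ℝ)/(q:ℝ))^2/2)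
        ≤ (w k)^2 * Real.cos (2*Real.pi*((((k:ℕ)*m : ℕ)):ℝ)/(q:ℝ)) := by
      intro k
      rw [hph k]
      have hb := Real.one_sub_sq_div_two_le_cos
        (x := 2*Real.pi*((D (k:ℕ)):ℝ)*(m:ℝ)/(q:ℝ))
      have h1 : (w k)^2 * (1 - (2*Real.pi*((D (k:ℕ)):ℝ)*(m:ℝ)/(q:ℝ))^2/2)
          ≤ (w k)^2 * Real.cos (2*Real.pi*((D (k:ℕ)):ℝ)*(m:ℝ)/(q:ℝ)) :=
        mul_le_mul_of_nonneg_left hb (sq_nonneg _)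
      calc (w k)^2 - (w k)^2*((D (k:ℕ)):ℝ)^2*((2*Real.pi*(m:ℝ)/(q:ℝ))^2/2)
          = (w k)^2 * (1 - (2*Real.pi*((D (k:ℕ)):ℝ)*(m:ℝ)/(q:ℝ))^2/2) := by ring
        _ ≤ _ := h1
    have hsum := Finset.sum_le_sum (fun k (_ : k ∈ Finset.univ) => hptw k)
    have hsplit : ∑ k : Fin q,
        ((w k)^2 - (w k)^2*((D (k:ℕ)):ℝ)^2*((2*Real.pi*(m:ℝ)/(q:ℝ))^2/2))
        = S0 - S2*((2*Real.pi*(m:ℝ)/(q:ℝ))^2/2) := by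
      rw [Finset.sum_sub_distrib, ← Finset.sum_mul, ← hS0, ← hS2]
    rw [hsplit] at hsum
    rw [hC]
    exact hsum
  -- (e) inner product identity and operator norm bound
  have hmain : α*S0 + β*C + γ*S1 ≤
      ‖Matrix.toEuclideanCLM (𝕜 := ℂ) (n := Fin q)
        ((α : ℂ) • 1 + (β : ℂ) • y + (γ : ℂ) • z)‖ * S0 := by
    set M : Matrix (Fin q) (Fin q) ℂ := (α : ℂ) • 1 + (β : ℂ) • y + (γ : ℂ) • z with hM
    set vf : Fin q → ℂ := fun k => ((w k : ℝ) : ℂ) with hvf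
    set v : EuclideanSpace ℂ (Fin q) := (WithLp.equiv 2 (Fin q → ℂ)).symm vf with hv
    have hqC : (q:ℂ) ≠ 0 := by exact_mod_cast hq0.ne'
    have hMv : ∀ i : Fin q, (M.mulVec vf) i
        = (α:ℂ) * vf i + (β:ℂ) * (ζ ^ ((i:ℕ)*m) * vf i) + (γ:ℂ) * vf (i - mf) := by
      intro i
      rw [hM, hy, hz, Matrix.add_mulVec, Matrix.add_mulVec, Pi.add_apply, Pi.add_apply,
        Matrix.smul_mulVec, Matrix.smul_mulVec, Matrix.smul_mulVec,
        Matrix.one_mulVec]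
      simp only [Pi.smul_apply, smul_eq_mul]
      rw [Matrix.mulVec_diagonal, hmf, stmt19_zmul q m hmq vf i]
    have hAv : (Matrix.toEuclideanCLM (𝕜 := ℂ) (n := Fin q) M) v
        = (WithLp.equiv 2 (Fin q → ℂ)).symm (M.mulVec vf) := by
      rw [hv, WithLp.equiv_symm_apply, Matrix.toEuclideanCLM_toLp]
    have hip : (inner ℂ v ((Matrix.toEuclideanCLM (𝕜 := ℂ) (n := Fin q) M) v) : ℂ)
        = ∑ i : Fin q, (starRingEnd ℂ) (vf i) * (M.mulVec vf) i := by
      rw [hAv, hv, PiLp.inner_apply]; exact Finset.sum_congr rfl fun i _ => by simp [mul_comm]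
    have hphase : ∀ i : Fin q, (ζ ^ ((i:ℕ)*m)).re
        = Real.cos (2*Real.pi*((((i:ℕ)*m : ℕ)):ℝ)/(q:ℝ)) := by
      intro i
      rw [hζ, ← Complex.exp_nat_mul]
      have harg : (((i:ℕ)*m : ℕ):ℂ) * (2*(Real.pi:ℂ)*Complex.I/(q:ℂ))
          = ((2*Real.pi*((((i:ℕ)*m : ℕ)):ℝ)/(q:ℝ) : ℝ) : ℂ) * Complex.I := by
        push_cast
        field_simp
      rw [harg, Complex.exp_ofReal_mul_I_re]
    have hterm : ∀ i : Fin q, ((starRingEnd ℂ) (vf i) * (M.mulVec vf) i).re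
        = α * (w i)^2 + ((w i)^2 * Real.cos (2*Real.pi*((((i:ℕ)*m : ℕ)):ℝ)/(q:ℝ))) * β
          + γ * (w i * w (i - mf)) := by
      intro i
      have e1 : (starRingEnd ℂ) (vf i) * (M.mulVec vf) i
          = ((α*(w i)^2 + γ*(w i * w (i - mf)) : ℝ) : ℂ)
            + ((β*(w i)^2 : ℝ):ℂ) * ζ^((i:ℕ)*m) := by
        rw [hMv i, hvf]
        simp only []
        rw [Complex.conj_ofReal]
        push_cast
        ring
      rw [e1, Complex.add_re, Complex.ofReal_re, Complex.re_ofReal_mul, hphase i]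
      ring
    have hre : (inner ℂ v ((Matrix.toEuclideanCLM (𝕜 := ℂ) (n := Fin q) M) v) : ℂ).re
        = α*S0 + β*C + γ*S1 := by
      rw [hip, Complex.re_sum, Finset.sum_congr rfl (fun i _ => hterm i),
        Finset.sum_add_distrib, Finset.sum_add_distrib, ← Finset.mul_sum, ← Finset.mul_sum,
        ← Finset.sum_mul, ← hS0, ← hS1, ← hC]
      ring
    have hnv : ‖v‖^2 = S0 := by
      rw [hv, EuclideanSpace.norm_eq, Real.sq_sqrt (by positivity), hS0]
      congr 1; ext i; simp [hvf, sq_abs]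
    calc α*S0 + β*C + γ*S1
        = (inner ℂ v ((Matrix.toEuclideanCLM (𝕜 := ℂ) (n := Fin q) M) v) : ℂ).re := hre.symm
      _ ≤ ‖(inner ℂ v ((Matrix.toEuclideanCLM (𝕜 := ℂ) (n := Fin q) M) v) : ℂ)‖ :=
          Complex.re_le_norm _
      _ ≤ ‖v‖ * ‖(Matrix.toEuclideanCLM (𝕜 := ℂ) (n := Fin q) M) v‖ :=
          norm_inner_le_norm _ _
      _ ≤ ‖v‖ * (‖Matrix.toEuclideanCLM (𝕜 := ℂ) (n := Fin q) M‖ * ‖v‖) := by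
          gcongr
          exact (Matrix.toEuclideanCLM (𝕜 := ℂ) (n := Fin q) M).le_opNorm v
      _ = ‖Matrix.toEuclideanCLM (𝕜 := ℂ) (n := Fin q) M‖ * ‖v‖^2 := by ring
      _ = ‖Matrix.toEuclideanCLM (𝕜 := ℂ) (n := Fin q) M‖ * S0 := by rw [hnv]
  -- (f) numeric conclusion
  set c : ℝ := 25/2 * (m:ℝ)^2 / (N:ℝ)^2 with hc
  have hgoalc : 1 - (25 / 2) * (m : ℝ) ^ 2 / (2 * (n : ℝ) + 1) ^ 2 = 1 - c := by
    rw [hc, hN]; push_cast; ring_nf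
  have hc0 : 0 ≤ c := by positivity
  have hreal25 : (25:ℝ)*(m:ℝ)^2 < 2*(N:ℝ)^2 := by exact_mod_cast h25
  have hc1 : c < 1 := by
    rw [hc, div_lt_one (by positivity)]
    linarith
  have hsqrt : Real.sqrt (1 - c) ≤ 1 - c/2 := by
    have h1 : (1 - c) ≤ (1 - c/2)^2 := by nlinarith [sq_nonneg c]
    calc Real.sqrt (1-c) ≤ Real.sqrt ((1-c/2)^2) := Real.sqrt_le_sqrt h1
      _ = 1 - c/2 := Real.sqrt_sq (by nlinarith)
  -- key per-coefficient estimates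
  have hbeta : (1 - c/2)*S0 ≤ C := by
    have hX : (2*Real.pi*(m:ℝ)/(q:ℝ))^2/2 ≤ 32*(m:ℝ)^2/(N:ℝ)^4 := by
      have hπ2 : Real.pi^2 ≤ 16 := by nlinarith
      rw [hqR]
      calc (2*Real.pi*(m:ℝ)/(N:ℝ)^2)^2/2 = (Real.pi^2) * (2*(m:ℝ)^2/(N:ℝ)^4) := by ring
        _ ≤ 16 * (2*(m:ℝ)^2/(N:ℝ)^4) := mul_le_mul_of_nonneg_right hπ2 (by positivity)
        _ = 32*(m:ℝ)^2/(N:ℝ)^4 := by ring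
    have hS2X : S2*((2*Real.pi*(m:ℝ)/(q:ℝ))^2/2) ≤ 4*(m:ℝ)^2*(N:ℝ) := by
      calc S2*((2*Real.pi*(m:ℝ)/(q:ℝ))^2/2)
          ≤ ((N:ℝ)^5/8)*(32*(m:ℝ)^2/(N:ℝ)^4) :=
            mul_le_mul hS2le hX (by positivity) (by positivity)
        _ = 4*(m:ℝ)^2*(N:ℝ) := by field_simp; ring
    have hchalf : (c/2) = 25*(m:ℝ)^2/(4*(N:ℝ)^2) := by rw [hc]; ring
    have hcS0 : 25*(m:ℝ)^2*(N:ℝ)/6 ≤ (c/2)*S0 := by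
      have h2 : (25*(m:ℝ)^2/(4*(N:ℝ)^2)) * (2*(N:ℝ)^3/3) ≤ (c/2)*S0 := by
        rw [hchalf]
        exact mul_le_mul_of_nonneg_left hS0low (by positivity)
      have h3 : (25*(m:ℝ)^2/(4*(N:ℝ)^2)) * (2*(N:ℝ)^3/3) = 25*(m:ℝ)^2*(N:ℝ)/6 := by
        field_simp; ring
      linarith [h3 ▸ h2]
    have h4 : 4*(m:ℝ)^2*(N:ℝ) ≤ 25*(m:ℝ)^2*(N:ℝ)/6 := by
      nlinarith [mul_nonneg (sq_nonneg (m:ℝ)) hNR.le]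
    linarith [hCge]
  have hgamma : (1 - c/2)*S0 ≤ S1 := by
    have h1 : ((N:ℝ)+m)*(m:ℝ)^2 ≤ (c/2)*S0 := by
      have h2 : (c/2)*S0 ≥ (25*(m:ℝ)^2/(4*(N:ℝ)^2)) * (2*(N:ℝ)^3/3) := by
        rw [hc]
        have : (25/2 * (m:ℝ)^2/(N:ℝ)^2)/2 = 25*(m:ℝ)^2/(4*(N:ℝ)^2) := by ring
        rw [this]
        apply mul_le_mul_of_nonneg_left hS0low (by positivity)
      have h3 : (25*(m:ℝ)^2/(4*(N:ℝ)^2)) * (2*(N:ℝ)^3/3) = 25*(m:ℝ)^2*(N:ℝ)/6 := by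
        field_simp; ring
      have hmR : (m:ℝ) ≤ (N:ℝ) := by exact_mod_cast le_of_lt hmN
      nlinarith [mul_nonneg (sub_nonneg.2 hmR) (sq_nonneg (m:ℝ)),
        mul_nonneg hNR.le (sq_nonneg (m:ℝ))]
    linarith [hS1ge]
  calc (α + β + γ) * Real.sqrt (1 - (25 / 2) * (m : ℝ) ^ 2 / (2 * (n : ℝ) + 1) ^ 2)
      = (α + β + γ) * Real.sqrt (1 - c) := by rw [hgoalc]
    _ ≤ (α + β + γ) * (1 - c/2) := by
        apply mul_le_mul_of_nonneg_left hsqrt (by linarith)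
    _ ≤ ‖Matrix.toEuclideanCLM (𝕜 := ℂ) (n := Fin q)
          ((α : ℂ) • 1 + (β : ℂ) • y + (γ : ℂ) • z)‖ := by
        rw [← mul_le_mul_iff_of_pos_right hS0pos]
        calc (α + β + γ) * (1 - c/2) * S0
            = α*((1-c/2)*S0) + β*((1-c/2)*S0) + γ*((1-c/2)*S0) := by ring
          _ ≤ α*S0 + β*C + γ*S1 := by
              have hα' : α*((1-c/2)*S0) ≤ α*S0 := by
                apply mul_le_mul_of_nonneg_left _ hα
                nlinarith
              have hβ' : β*((1-c/2)*S0) ≤ β*C := mul_le_mul_of_nonneg_left hbeta hβ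
              have hγ' : γ*((1-c/2)*S0) ≤ γ*S1 := mul_le_mul_of_nonneg_left hgamma hγ
              linarith
          _ ≤ _ := hmain
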